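/- arXiv:2410.06559 — 3 statements merged into one kernel-verified Lean document; each statement's English description precedes it below -/
import Mathlib

section
/- The pseudometric space (𝒫(ℕ), d) with d(A,B) := ν⁺(A △ B) is complete: every Cauchy sequence of subsets of ℕ converges to some subset of ℕ in the pseudometric d. -/
open Filter
open scoped symmDiff Classical

noncomputable def densSeq (A : Set ℕ) (n : ℕ) : ℝ :=
  ((Finset.range n).filter (· ∈ A)).card / (n : ℝ)

noncomputable def nuPlus (A : Set ℕ) : ℝ :=
  Filter.atTop.limsup (densSeq A)

noncomputable def nuMinus (A : Set ℕ) : ℝ :=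
  Filter.atTop.liminf (densSeq A)

lemma densSeq_nonneg (A : Set ℕ) (n : ℕ) : 0 ≤ densSeq A n := by
  unfold densSeq; positivity

lemma densSeq_le_one (A : Set ℕ) (n : ℕ) : densSeq A n ≤ 1 := by
  rcases Nat.eq_zero_or_pos n with h | h
  · simp [densSeq, h]
  · rw [densSeq, div_le_one (by exact_mod_cast h)]
    exact_mod_cast (Finset.card_filter_le _ _).trans (by simp)

lemma densSeq_bddAbove (A : Set ℕ) :
    IsBoundedUnder (· ≤ ·) atTop (densSeq A) :=
  isBoundedUnder_of ⟨1, fun n => densSeq_le_one A n⟩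

lemma densSeq_bddBelow (A : Set ℕ) :
    IsBoundedUnder (· ≥ ·) atTop (densSeq A) :=
  isBoundedUnder_of ⟨0, fun n => densSeq_nonneg A n⟩

lemma nuPlus_nonneg (A : Set ℕ) : 0 ≤ nuPlus A :=
  le_limsup_of_frequently_le (Frequently.of_forall fun n => densSeq_nonneg A n)
    (densSeq_bddAbove A)

lemma densSeq_mono {A B : Set ℕ} (h : A ⊆ B) (n : ℕ) : densSeq A n ≤ densSeq B n := by
  unfold densSeq
  refine div_le_div_of_nonneg_right ?_ (Nat.cast_nonneg n)
  exact_mod_cast Finset.card_le_card (by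
    intro x hx
    simp only [Finset.mem_filter] at hx ⊢
    exact ⟨hx.1, h hx.2⟩)

lemma densSeq_union_le (A B : Set ℕ) (n : ℕ) :
    densSeq (A ∪ B) n ≤ densSeq A n + densSeq B n := by
  unfold densSeq
  rw [← add_div]
  refine div_le_div_of_nonneg_right ?_ (Nat.cast_nonneg n)
  rw [← Nat.cast_add, Nat.cast_le]
  refine (Finset.card_le_card
      (t := (Finset.range n).filter (· ∈ A) ∪ (Finset.range n).filter (· ∈ B)) ?_).trans
    (Finset.card_union_le _ _)
  intro x hx
  simp only [Finset.mem_filter, Finset.mem_union, Set.mem_union] at hx ⊢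
  tauto

lemma nuPlus_triangle (X Y Z : Set ℕ) :
    nuPlus (X ∆ Z) ≤ nuPlus (X ∆ Y) + nuPlus (Y ∆ Z) := by
  have hpt : ∀ n, densSeq (X ∆ Z) n ≤ densSeq (X ∆ Y) n + densSeq (Y ∆ Z) n := by
    intro n
    calc densSeq (X ∆ Z) n ≤ densSeq ((X ∆ Y) ∪ (Y ∆ Z)) n :=
          densSeq_mono (by simpa using symmDiff_triangle X Y Z) n
      _ ≤ _ := densSeq_union_le _ _ n
  calc nuPlus (X ∆ Z) ≤ atTop.limsup (densSeq (X ∆ Y) + densSeq (Y ∆ Z)) := by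
        refine limsup_le_limsup (Eventually.of_forall hpt) ?_ ?_
        · exact (densSeq_bddBelow _).isCoboundedUnder_le
        · exact isBoundedUnder_of ⟨2, fun n => by
            have := densSeq_le_one (X ∆ Y) n
            have := densSeq_le_one (Y ∆ Z) n
            simp only [Pi.add_apply]; linarith⟩
    _ ≤ _ := limsup_add_le (densSeq_bddBelow _) (densSeq_bddAbove _)
        (densSeq_bddBelow _).isCoboundedUnder_le (densSeq_bddAbove _)

/-- Auxiliary increasing dominating sequence. -/
def phiAux (N : ℕ → ℕ) : ℕ → ℕ
  | 0 => N 0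
  | k + 1 => max (phiAux N k + 1) (N (k + 1))

lemma phiAux_strictMono (N : ℕ → ℕ) : StrictMono (phiAux N) :=
  strictMono_nat_of_lt_succ fun k => lt_of_lt_of_le (Nat.lt_succ_self _) (le_max_left _ _)

lemma le_phiAux (N : ℕ → ℕ) (k : ℕ) : N k ≤ phiAux N k := by
  cases k with
  | zero => exact le_rfl
  | succ k => exact le_max_right _ _

/-- Auxiliary block boundaries. -/
def mAux (M : ℕ → ℕ) : ℕ → ℕ
  | 0 => 0
  | l + 1 => max (mAux M l + 1) (M l)

lemma mAux_strictMono (M : ℕ → ℕ) : StrictMono (mAux M) :=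
  strictMono_nat_of_lt_succ fun l => lt_of_lt_of_le (Nat.lt_succ_self _) (le_max_left _ _)

lemma M_le_mAux (M : ℕ → ℕ) (l : ℕ) : M l ≤ mAux M (l + 1) := le_max_right _ _

lemma self_le_mAux (M : ℕ → ℕ) (l : ℕ) : l ≤ mAux M l := by
  induction l with
  | zero => exact Nat.zero_le _
  | succ l ih => exact Nat.succ_le_of_lt (lt_of_le_of_lt ih (mAux_strictMono M (Nat.lt_succ_self l)))

lemma self_le_phiAux (N : ℕ → ℕ) (k : ℕ) : k ≤ phiAux N k := by
  induction k with
  | zero => exact Nat.zero_le _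
  | succ k ih => exact Nat.succ_le_of_lt (lt_of_le_of_lt ih (phiAux_strictMono N (Nat.lt_succ_self k)))

/-- Chain covering of symmetric difference. -/
lemma chain_symmDiff (S : ℕ → Set ℕ) :
    ∀ i j, j ≤ i → ∀ x, x ∈ S j ∆ S i → ∃ l, j ≤ l ∧ l < i ∧ x ∈ S l ∆ S (l + 1) := by
  intro i
  induction i with
  | zero =>
    intro j hj x hx
    interval_cases j
    simp [symmDiff_self] at hx
  | succ i ih =>
    intro j hj x hx
    rcases Nat.lt_or_ge j (i + 1) with hj' | hj'
    · have hj'' : j ≤ i := Nat.lt_succ_iff.mp hj'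
      have : x ∈ (S j ∆ S i) ∪ (S i ∆ S (i + 1)) := by
        have := symmDiff_triangle (S j) (S i) (S (i + 1))
        exact this hx
      rcases this with h | h
      · obtain ⟨l, h1, h2, h3⟩ := ih j hj'' x h
        exact ⟨l, h1, h2.trans (Nat.lt_succ_self i), h3⟩
      · exact ⟨i, hj'', Nat.lt_succ_self i, h⟩
    · have hje : j = i + 1 := le_antisymm hj hj'
      subst hje
      simp [symmDiff_self] at hx

theorem nuPlus_symmDiff_complete (A : ℕ → Set ℕ)
    (hcauchy : ∀ ε > (0 : ℝ), ∃ N, ∀ m n, N ≤ m → N ≤ n →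
      nuPlus (A m ∆ A n) < ε) :
    ∃ B : Set ℕ, Tendsto (fun n => nuPlus (A n ∆ B)) atTop (nhds 0) := by
  classical
  choose N hN using fun k : ℕ => hcauchy ((1/2 : ℝ)^k) (by positivity)
  set φ : ℕ → ℕ := phiAux N with hφdef
  have hφmono : StrictMono φ := phiAux_strictMono N
  have hφpair : ∀ j i, j ≤ i → nuPlus (A (φ j) ∆ A (φ i)) < (1/2 : ℝ)^j := by
    intro j i hji
    exact hN j (φ j) (φ i) (le_phiAux N j) ((le_phiAux N j).trans (hφmono.monotone hji))
  have hev : ∀ l : ℕ, ∃ M : ℕ, ∀ t, M ≤ t →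
      densSeq (A (φ l) ∆ A (φ (l+1))) t < (1/2:ℝ)^l := by
    intro l
    have h1 : nuPlus (A (φ l) ∆ A (φ (l+1))) < (1/2:ℝ)^l := hφpair l (l+1) (Nat.le_succ l)
    have h2 := eventually_lt_of_limsup_lt h1 (densSeq_bddAbove _)
    rw [eventually_atTop] at h2
    exact h2
  choose M hM using hev
  set m : ℕ → ℕ := mAux M with hmdef
  have hmmono : StrictMono m := mAux_strictMono M
  have hm0 : m 0 = 0 := rfl
  set blk : ℕ → ℕ := fun x => Nat.findGreatest (fun k => m k ≤ x) x with hblkdef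
  have hblk_le : ∀ x, m (blk x) ≤ x := fun x =>
    Nat.findGreatest_spec (P := fun k => m k ≤ x) (Nat.zero_le x) (by simp [hm0])
  have hblk_ge : ∀ x j, m j ≤ x → j ≤ blk x := fun x j hj =>
    Nat.le_findGreatest ((self_le_mAux M j).trans hj) hj
  set B : Set ℕ := { x | x ∈ A (φ (blk x)) } with hBdef
  refine ⟨B, ?_⟩
  -- key pointwise density estimate
  have hcount : ∀ j t : ℕ, densSeq (A (φ j) ∆ B) t ≤ (m j : ℝ)/t + 2 * (1/2)^j := by
    intro j t
    rcases Nat.eq_zero_or_pos t with ht | ht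
    · subst ht
      simp only [densSeq, Finset.range_zero, Finset.filter_empty, Finset.card_empty,
        Nat.cast_zero, div_zero, zero_div]
      positivity
    have htR : (0:ℝ) < t := by exact_mod_cast ht
    have hsub : (Finset.range t).filter (· ∈ A (φ j) ∆ B) ⊆
        Finset.range (m j) ∪ (Finset.Ico j t).biUnion (fun l =>
          (Finset.range t).filter (fun x => m (l+1) ≤ x ∧ x ∈ A (φ l) ∆ A (φ (l+1)))) := by
      intro x hx
      simp only [Finset.mem_filter, Finset.mem_range] at hx
      obtain ⟨hxt, hxmem⟩ := hx
      rcases Nat.lt_or_ge x (m j) with hxm | hxm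
      · simp only [Finset.mem_union, Finset.mem_range]
        exact Or.inl hxm
      · have hjblk : j ≤ blk x := hblk_ge x j hxm
        have hxd : x ∈ A (φ j) ∆ A (φ (blk x)) := by
          rw [Set.mem_symmDiff] at hxmem ⊢
          exact hxmem
        obtain ⟨l, hl1, hl2, hl3⟩ := chain_symmDiff (fun k => A (φ k)) (blk x) j hjblk x hxd
        have hmlx : m (l+1) ≤ x := (hmmono.monotone hl2).trans (hblk_le x)
        have hlt : l < t := by
          have h5 := (self_le_mAux M (l+1)).trans hmlx
          omega
        simp only [Finset.mem_union, Finset.mem_biUnion, Finset.mem_Ico, Finset.mem_filter,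
          Finset.mem_range]
        exact Or.inr ⟨l, ⟨hl1, hlt⟩, hxt, hmlx, hl3⟩
    have hnat : ((Finset.range t).filter (· ∈ A (φ j) ∆ B)).card ≤
        m j + ∑ l ∈ Finset.Ico j t, ((Finset.range t).filter
          (fun x => m (l+1) ≤ x ∧ x ∈ A (φ l) ∆ A (φ (l+1)))).card := by
      refine (Finset.card_le_card hsub).trans ?_
      refine (Finset.card_union_le _ _).trans ?_
      rw [Finset.card_range]
      exact add_le_add_right Finset.card_biUnion_le _
    have hterm : ∀ l ∈ Finset.Ico j t, ((((Finset.range t).filter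
        (fun x => m (l+1) ≤ x ∧ x ∈ A (φ l) ∆ A (φ (l+1)))).card : ℝ)) ≤ (1/2)^l * t := by
      intro l _
      rcases Nat.lt_or_ge t (m (l+1)) with h | h
      · have hempty : (Finset.range t).filter
            (fun x => m (l+1) ≤ x ∧ x ∈ A (φ l) ∆ A (φ (l+1))) = ∅ := by
          rw [Finset.filter_eq_empty_iff]
          intro x hx
          simp only [Finset.mem_range] at hx
          intro hc
          omega
        rw [hempty]
        simp only [Finset.card_empty, Nat.cast_zero]
        positivity
      · have hMl : M l ≤ t := (M_le_mAux M l).trans h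
        have hc := hM l t hMl
        rw [densSeq, div_lt_iff₀ htR] at hc
        refine le_trans ?_ hc.le
        refine Nat.cast_le.mpr (Finset.card_le_card ?_)
        intro x hx
        simp only [Finset.mem_filter] at hx ⊢
        exact ⟨hx.1, hx.2.2⟩
    have hsumgeom : ∑ l ∈ Finset.Ico j t, ((1:ℝ)/2)^l ≤ 2 * (1/2)^j := by
      rcases le_or_gt j t with hjt | hjt
      · rw [Finset.sum_Ico_eq_sum_range]
        simp_rw [pow_add]
        rw [← Finset.mul_sum]
        calc ((1:ℝ)/2)^j * ∑ i ∈ Finset.range (t - j), ((1:ℝ)/2)^i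
            ≤ ((1:ℝ)/2)^j * 2 := by
              refine mul_le_mul_of_nonneg_left (sum_geometric_two_le _) (by positivity)
          _ = 2 * (1/2)^j := mul_comm _ _
      · rw [Finset.Ico_eq_empty (by omega), Finset.sum_empty]
        positivity
    calc densSeq (A (φ j) ∆ B) t ≤ ((m j : ℝ) + 2 * (1/2)^j * t) / t := by
          unfold densSeq
          refine div_le_div_of_nonneg_right ?_ (Nat.cast_nonneg t)
          have h1 : (((Finset.range t).filter (· ∈ A (φ j) ∆ B)).card : ℝ) ≤
              (m j : ℝ) + ∑ l ∈ Finset.Ico j t, ((((Finset.range t).filter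
                (fun x => m (l+1) ≤ x ∧ x ∈ A (φ l) ∆ A (φ (l+1)))).card : ℝ)) := by
            exact_mod_cast hnat
          refine h1.trans (add_le_add_right ?_ _)
          calc (∑ l ∈ Finset.Ico j t, ((((Finset.range t).filter
              (fun x => m (l+1) ≤ x ∧ x ∈ A (φ l) ∆ A (φ (l+1)))).card : ℝ)))
              ≤ ∑ l ∈ Finset.Ico j t, ((1:ℝ)/2)^l * t := Finset.sum_le_sum hterm
            _ = (∑ l ∈ Finset.Ico j t, ((1:ℝ)/2)^l) * t := by rw [Finset.sum_mul]
            _ ≤ 2 * (1/2)^j * t := mul_le_mul_of_nonneg_right hsumgeom htR.le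
      _ = (m j : ℝ)/t + 2 * (1/2)^j := by
          rw [add_div, mul_div_assoc, div_self htR.ne', mul_one]
  -- limsup bound
  have hnuB : ∀ j, nuPlus (A (φ j) ∆ B) ≤ 2 * (1/2)^j := by
    intro j
    have htend : Tendsto (fun t : ℕ => (m j : ℝ)/t + 2*(1/2)^j) atTop (nhds (0 + 2*(1/2)^j)) :=
      (tendsto_const_div_atTop_nhds_zero_nat _).add tendsto_const_nhds
    rw [zero_add] at htend
    calc nuPlus (A (φ j) ∆ B) ≤ atTop.limsup (fun t : ℕ => (m j:ℝ)/t + 2*(1/2)^j) := by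
          refine limsup_le_limsup (Eventually.of_forall (hcount j)) ?_ ?_
          · exact (densSeq_bddBelow _).isCoboundedUnder_le
          · exact htend.isBoundedUnder_le
      _ = 2*(1/2)^j := htend.limsup_eq
  -- conclude
  rw [Metric.tendsto_atTop]
  intro ε hε
  obtain ⟨k₀, hk₀⟩ := exists_pow_lt_of_lt_one (show (0:ℝ) < ε/4 by linarith)
    (show (1:ℝ)/2 < 1 by norm_num)
  obtain ⟨N', hN'⟩ := hcauchy (ε/4) (by linarith)
  refine ⟨N', fun n hn => ?_⟩
  set K := max k₀ N' with hK
  have hφK : N' ≤ φ K := le_trans (le_max_right _ _) ((self_le_phiAux N K).trans le_rfl)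
  have h1 : nuPlus (A n ∆ A (φ K)) < ε/4 := hN' n (φ K) hn hφK
  have h2 : nuPlus (A (φ K) ∆ B) ≤ 2 * (1/2)^K := hnuB K
  have h3 : ((1:ℝ)/2)^K ≤ (1/2)^k₀ :=
    pow_le_pow_of_le_one (by norm_num) (by norm_num) (le_max_left _ _)
  have h4 : nuPlus (A n ∆ B) ≤ nuPlus (A n ∆ A (φ K)) + nuPlus (A (φ K) ∆ B) :=
    nuPlus_triangle _ _ _
  rw [Real.dist_eq, sub_zero, abs_of_nonneg (nuPlus_nonneg _)]
  have : nuPlus (A n ∆ B) < ε/4 + 2 * (ε/4) := by nlinarith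
  linarith
end

section
/- The collection 𝒟 of subsets of ℕ having asymptotic density (i.e., sets A for which lim_{n→∞} |A ∩ {0,...,n-1}|/n exists) is a closed subset of 𝒫(ℕ) with respect to the pseudometric d(A,B) := ν⁺(A △ B). -/
open Filter
open scoped symmDiff Classical

lemma densSeq_triangle (A B : Set ℕ) (n : ℕ) :
    densSeq B n ≤ densSeq A n + densSeq (A ∆ B) n := by
  unfold densSeq
  rw [← add_div]
  rcases Nat.eq_zero_or_pos n with h | h
  · simp [h]
  · gcongr
    have hsub : (Finset.range n).filter (· ∈ B) ⊆
        ((Finset.range n).filter (· ∈ A)) ∪ ((Finset.range n).filter (· ∈ A ∆ B)) := by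
      intro x hx
      simp only [Finset.mem_filter, Finset.mem_union] at hx ⊢
      by_cases hxA : x ∈ A
      · exact Or.inl ⟨hx.1, hxA⟩
      · exact Or.inr ⟨hx.1, Or.inr ⟨hx.2, hxA⟩⟩
    calc (((Finset.range n).filter (· ∈ B)).card : ℝ)
        ≤ ((((Finset.range n).filter (· ∈ A)) ∪ ((Finset.range n).filter (· ∈ A ∆ B))).card : ℝ) := by
          exact_mod_cast Finset.card_le_card hsub
      _ ≤ _ := by exact_mod_cast Finset.card_union_le _ _

lemma key_ineq (C B : Set ℕ) (hC : nuPlus C = nuMinus C) :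
    nuPlus B - nuMinus B ≤ 2 * nuPlus (C ∆ B) := by
  have h1 : nuPlus B ≤ nuPlus C + nuPlus (C ∆ B) := by
    calc nuPlus B ≤ atTop.limsup (densSeq C + densSeq (C ∆ B)) :=
          limsup_le_limsup (Eventually.of_forall fun n => densSeq_triangle C B n)
            ((densSeq_bddBelow B).isCoboundedUnder_le)
            (isBoundedUnder_le_add (densSeq_bddAbove C) (densSeq_bddAbove (C ∆ B)))
      _ ≤ nuPlus C + nuPlus (C ∆ B) :=
          limsup_add_le (densSeq_bddBelow C) (densSeq_bddAbove C)
            ((densSeq_bddBelow (C ∆ B)).isCoboundedUnder_le) (densSeq_bddAbove (C ∆ B))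
  have h2 : nuMinus C ≤ nuPlus (C ∆ B) + nuMinus B := by
    have hCB : C ∆ B = B ∆ C := symmDiff_comm C B
    calc nuMinus C ≤ atTop.liminf (densSeq (C ∆ B) + densSeq B) := by
          refine liminf_le_liminf (Eventually.of_forall fun n => ?_)
            (densSeq_bddBelow C) (isCoboundedUnder_ge_add (densSeq_bddAbove (C ∆ B)) (densSeq_bddAbove B).isCoboundedUnder_ge)
          have := densSeq_triangle B C n
          rw [hCB]; simpa [add_comm] using this
      _ ≤ nuPlus (C ∆ B) + nuMinus B :=
          liminf_add_le (densSeq_bddBelow (C ∆ B)) (densSeq_bddAbove (C ∆ B))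
            (densSeq_bddBelow B) ((densSeq_bddAbove B).isCoboundedUnder_ge)
  have := hC ▸ h1
  linarith

theorem density_sets_closed (A : ℕ → Set ℕ) (B : Set ℕ)
    (hA : ∀ i, nuPlus (A i) = nuMinus (A i))
    (hlim : Tendsto (fun i => nuPlus (A i ∆ B)) atTop (nhds 0)) :
    nuPlus B = nuMinus B := by
  have hle : nuMinus B ≤ nuPlus B :=
    liminf_le_limsup (densSeq_bddAbove B) (densSeq_bddBelow B)
  have h2 : Tendsto (fun i => 2 * nuPlus (A i ∆ B)) atTop (nhds 0) := by
    simpa using hlim.const_mul 2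
  have hub : nuPlus B - nuMinus B ≤ 0 :=
    ge_of_tendsto h2 (Eventually.of_forall fun i => key_ineq (A i) B (hA i))
  linarith
end

section
/- Let X be a set, ℱ ⊆ 𝒫(X) a field, ℰ ⊆ ℱ, and (μ⁺, μ⁻) a conjugate pair of set functions on ℱ (μ⁺ subadditive, μ⁻ superadditive, μ⁻ co-subadditive w.r.t. μ⁺, μ⁺ co-superadditive w.r.t. μ⁻) agreeing on ℰ. Suppose (ℰ, d_{μ⁺}) is complete, where d_{μ⁺}(A,B) := μ⁺(A △ B). Then for every sequence (A_i) in ℰ such that the nets {μ⁺(∪_{k=i}^j A_k) : i ≤ j} and {μ⁻(∪_{k=i}^j A_k) : i ≤ j} (indexed by pairs (i,j) with the product order) converge to a common limit L, the net {∪_{k=i}^j A_k : i ≤ j} converges in d_{μ⁺} to some A ∈ ℰ with μ⁺(A) = L. -/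
open Filter
open scoped symmDiff

lemma aux_ind_le {X : Type*} (S T V : Set X) (h : S ⊆ T ∪ V) :
    ∀ x, S.indicator (1 : X → ℝ) x ≤ T.indicator 1 x + V.indicator 1 x := by
  intro x
  have hT : (0:ℝ) ≤ T.indicator (1 : X → ℝ) x :=
    Set.indicator_nonneg (fun _ _ => zero_le_one) x
  have hV : (0:ℝ) ≤ V.indicator (1 : X → ℝ) x :=
    Set.indicator_nonneg (fun _ _ => zero_le_one) x
  by_cases h1 : x ∈ S
  · rcases h h1 with h2 | h2
    · simp only [Set.indicator_of_mem h1, Set.indicator_of_mem h2, Pi.one_apply]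
      linarith
    · simp only [Set.indicator_of_mem h1, Set.indicator_of_mem h2, Pi.one_apply]
      linarith
  · simp only [Set.indicator_of_notMem h1]
    linarith

lemma aux_ind_add_le {X : Type*} (B C A : Set X) (hB : B ⊆ A) (hC : C ⊆ A)
    (hd : Disjoint B C) :
    ∀ x, B.indicator (1 : X → ℝ) x + C.indicator 1 x ≤ A.indicator 1 x := by
  intro x
  by_cases h1 : x ∈ B
  · have h2 : x ∉ C := Set.disjoint_left.mp hd h1
    simp [Set.indicator_of_mem h1, Set.indicator_of_notMem h2,
      Set.indicator_of_mem (hB h1)]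
  · by_cases h2 : x ∈ C
    · simp [Set.indicator_of_notMem h1, Set.indicator_of_mem h2,
        Set.indicator_of_mem (hC h2)]
    · simp only [Set.indicator_of_notMem h1, Set.indicator_of_notMem h2, add_zero]
      exact Set.indicator_nonneg (fun _ _ => zero_le_one) x

theorem net_convergence_of_complete
    {X : Type*} (F E : Set (Set X)) (μp μm : Set X → ℝ)
    (hEF : E ⊆ F)
    (hempty : (∅ : Set X) ∈ F)
    (hcompl : ∀ A ∈ F, Aᶜ ∈ F)
    (hunion : ∀ A ∈ F, ∀ B ∈ F, A ∪ B ∈ F)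
    (hzero : μp ∅ = 0 ∧ μm ∅ = 0)
    (hone : μp Set.univ = 1 ∧ μm Set.univ = 1)
    (hrange : ∀ A ∈ F, μp A ∈ Set.Icc (0:ℝ) 1 ∧ μm A ∈ Set.Icc (0:ℝ) 1)
    (hsub : ∀ A ∈ F, ∀ B ∈ F, ∀ C ∈ F,
      (∀ x, A.indicator (1 : X → ℝ) x ≤ B.indicator 1 x + C.indicator 1 x) →
      μp A ≤ μp B + μp C)
    (hsuper : ∀ A ∈ F, ∀ B ∈ F, ∀ C ∈ F,
      (∀ x, B.indicator (1 : X → ℝ) x + C.indicator 1 x ≤ A.indicator 1 x) →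
      μm B + μm C ≤ μm A)
    (hcosub : ∀ A ∈ F, ∀ B ∈ F, ∀ C ∈ F,
      (∀ x, A.indicator (1 : X → ℝ) x ≤ B.indicator 1 x + C.indicator 1 x) →
      μm A ≤ μm B + μp C)
    (hcosup : ∀ A ∈ F, ∀ B ∈ F, ∀ C ∈ F,
      (∀ x, B.indicator (1 : X → ℝ) x + C.indicator 1 x ≤ A.indicator 1 x) →
      μp B + μm C ≤ μp A)
    (hagree : ∀ A ∈ E, μp A = μm A)
    (hcomplete : ∀ S : ℕ → Set X, (∀ n, S n ∈ E) →
      (∀ ε > (0 : ℝ), ∃ N, ∀ m n, N ≤ m → N ≤ n → μp (S m ∆ S n) < ε) →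
      ∃ T ∈ E, Tendsto (fun n => μp (S n ∆ T)) atTop (nhds 0))
    (A : ℕ → Set X) (hA : ∀ i, A i ∈ E) (L : ℝ)
    (hplus : ∀ ε > (0 : ℝ), ∃ N, ∀ i j, N ≤ i → i ≤ j →
      |μp (⋃ k ∈ Finset.Icc i j, A k) - L| < ε)
    (hminus : ∀ ε > (0 : ℝ), ∃ N, ∀ i j, N ≤ i → i ≤ j →
      |μm (⋃ k ∈ Finset.Icc i j, A k) - L| < ε) :
    ∃ B ∈ E, μp B = L ∧
      ∀ ε > (0 : ℝ), ∃ N, ∀ i j, N ≤ i → i ≤ j →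
        μp ((⋃ k ∈ Finset.Icc i j, A k) ∆ B) < ε := by
  classical
  -- field closure lemmas
  have hFdiff : ∀ P ∈ F, ∀ Q ∈ F, P \ Q ∈ F := by
    intro P hP Q hQ
    have h : P \ Q = (Pᶜ ∪ Q)ᶜ := by ext x; simp [Set.mem_diff]
    rw [h]; exact hcompl _ (hunion _ (hcompl _ hP) _ hQ)
  have hFsymm : ∀ P ∈ F, ∀ Q ∈ F, (P ∆ Q) ∈ F := by
    intro P hP Q hQ
    rw [Set.symmDiff_def]
    exact hunion _ (hFdiff P hP Q hQ) _ (hFdiff Q hQ P hP)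
  have hFU : ∀ s : Finset ℕ, (⋃ k ∈ s, A k) ∈ F := by
    intro s
    induction s using Finset.induction with
    | empty => simpa using hempty
    | insert h _ _ ih =>
      rw [Finset.set_biUnion_insert]
      exact hunion _ (hEF (hA _)) _ ih
  -- basic metric lemmas
  have htri : ∀ P ∈ F, ∀ Q ∈ F, ∀ R ∈ F, μp (P ∆ R) ≤ μp (P ∆ Q) + μp (Q ∆ R) := by
    intro P hP Q hQ R hR
    exact hsub _ (hFsymm P hP R hR) _ (hFsymm P hP Q hQ) _ (hFsymm Q hQ R hR)
      (aux_ind_le _ _ _ (symmDiff_triangle P Q R))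
  have habs : ∀ P ∈ F, ∀ Q ∈ F, |μp P - μp Q| ≤ μp (P ∆ Q) := by
    intro P hP Q hQ
    rw [abs_sub_le_iff]
    constructor
    · have h1 : P ⊆ Q ∪ (P ∆ Q) := by
        intro x hx
        by_cases h : x ∈ Q
        · exact Or.inl h
        · exact Or.inr (by simp [Set.mem_symmDiff]; tauto)
      have := hsub _ hP _ hQ _ (hFsymm P hP Q hQ) (aux_ind_le _ _ _ h1)
      linarith
    · have h1 : Q ⊆ P ∪ (P ∆ Q) := by
        intro x hx
        by_cases h : x ∈ P
        · exact Or.inl h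
        · exact Or.inr (by simp [Set.mem_symmDiff]; tauto)
      have := hsub _ hQ _ hP _ (hFsymm P hP Q hQ) (aux_ind_le _ _ _ h1)
      linarith
  have hsb : ∀ P ∈ F, ∀ Q ∈ F, P ⊆ Q → μp (Q ∆ P) ≤ μp Q - μm P := by
    intro P hP Q hQ hPQ
    have hd : Q ∆ P = Q \ P := by rw [symmDiff_comm]; exact symmDiff_of_le hPQ
    rw [hd]
    have := hcosup Q hQ (Q \ P) (hFdiff Q hQ P hP) P hP
      (aux_ind_add_le _ _ _ Set.diff_subset hPQ Set.disjoint_sdiff_left)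
    linarith
  have hAU : ∀ i j m, i ≤ m → m ≤ j → A m ⊆ (⋃ k ∈ Finset.Icc i j, A k) := by
    intro i j m him hmj x hx
    exact Set.mem_biUnion (Finset.mem_Icc.mpr ⟨him, hmj⟩) hx
  have hUii : ∀ i, (⋃ k ∈ Finset.Icc i i, A k) = A i := by intro i; simp
  -- key estimate
  have key : ∀ ε > (0:ℝ), ∃ N, ∀ i j m, N ≤ i → i ≤ m → m ≤ j →
      μp ((⋃ k ∈ Finset.Icc i j, A k) ∆ A m) < ε := by
    intro ε hε
    obtain ⟨N1, h1⟩ := hplus (ε/2) (by linarith)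
    obtain ⟨N2, h2⟩ := hminus (ε/2) (by linarith)
    refine ⟨max N1 N2, fun i j m hNi him hmj => ?_⟩
    have hb := hsb (A m) (hEF (hA m)) _ (hFU (Finset.Icc i j)) (hAU i j m him hmj)
    have e1 := h1 i j (le_trans (le_max_left _ _) hNi) (le_trans him hmj)
    have e2 := h2 m m (le_trans (le_trans (le_max_right _ _) hNi) him) le_rfl
    rw [hUii] at e2
    rw [abs_lt] at e1 e2
    linarith [e1.2, e2.1]
  -- the sequence A is Cauchy
  have hcauchy : ∀ ε > (0:ℝ), ∃ N, ∀ m n, N ≤ m → N ≤ n → μp (A m ∆ A n) < ε := by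
    intro ε hε
    obtain ⟨N, hN⟩ := key (ε/2) (by linarith)
    refine ⟨N, fun m n hm hn => ?_⟩
    set i := min m n with hi
    set j := max m n with hj
    have hNi : N ≤ i := le_min hm hn
    have h1 : μp ((⋃ k ∈ Finset.Icc i j, A k) ∆ A m) < ε/2 :=
      hN i j m hNi (min_le_left _ _) (le_max_left _ _)
    have h2 : μp ((⋃ k ∈ Finset.Icc i j, A k) ∆ A n) < ε/2 :=
      hN i j n hNi (min_le_right _ _) (le_max_right _ _)
    have ht := htri (A m) (hEF (hA m)) _ (hFU (Finset.Icc i j)) (A n) (hEF (hA n))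
    rw [show A m ∆ (⋃ k ∈ Finset.Icc i j, A k) = (⋃ k ∈ Finset.Icc i j, A k) ∆ A m from symmDiff_comm _ _] at ht
    linarith
  obtain ⟨B, hBE, hBlim⟩ := hcomplete A hA hcauchy
  have hBF : B ∈ F := hEF hBE
  have hlim : ∀ ε > (0:ℝ), ∃ N, ∀ n, N ≤ n → μp (A n ∆ B) < ε := by
    intro ε hε
    obtain ⟨N, hN⟩ := Metric.tendsto_atTop.mp hBlim ε hε
    refine ⟨N, fun n hn => ?_⟩
    have := hN n hn
    rw [Real.dist_eq, sub_zero] at this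
    exact lt_of_le_of_lt (le_abs_self _) this
  refine ⟨B, hBE, ?_, ?_⟩
  · -- μp B = L
    by_contra hne
    have hpos : 0 < |μp B - L| := abs_pos.mpr (sub_ne_zero.mpr hne)
    set ε := |μp B - L| with hεdef
    obtain ⟨N1, h1⟩ := hplus (ε/3) (by linarith)
    obtain ⟨N2, h2⟩ := hlim (ε/3) (by linarith)
    set n := max N1 N2 with hn
    have e1 := h1 n n (le_max_left _ _) le_rfl
    rw [hUii] at e1
    have e2 := h2 n (le_max_right _ _)
    have e3 := habs B hBF (A n) (hEF (hA n))
    rw [symmDiff_comm] at e3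
    have : ε ≤ |μp B - μp (A n)| + |μp (A n) - L| := by
      calc ε = |μp B - L| := rfl
        _ = |(μp B - μp (A n)) + (μp (A n) - L)| := by ring_nf
        _ ≤ _ := abs_add_le _ _
    rw [abs_lt] at e1
    have e4 : |μp B - μp (A n)| < ε/3 := lt_of_le_of_lt e3 e2
    rw [abs_lt] at e4
    have : ε ≤ |μp B - μp (A n)| + |μp (A n) - L| := this
    have e5 : |μp B - μp (A n)| < ε/3 := by rw [abs_lt]; exact e4
    have e6 : |μp (A n) - L| < ε/3 := by rw [abs_lt]; exact e1
    linarith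
  · intro ε hε
    obtain ⟨N1, h1⟩ := key (ε/2) (by linarith)
    obtain ⟨N2, h2⟩ := hlim (ε/2) (by linarith)
    refine ⟨max N1 N2, fun i j hi hij => ?_⟩
    have e1 := h1 i j i (le_trans (le_max_left _ _) hi) le_rfl hij
    have e2 := h2 i (le_trans (le_max_right _ _) hi)
    have ht := htri _ (hFU (Finset.Icc i j)) (A i) (hEF (hA i)) B hBF
    linarith
end
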